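/- Let n, p ≥ 1, let Φ be a real n×p matrix, W a symmetric positive semidefinite real n×n matrix, θ₀ ∈ ℝ^p with support S = {j : θ₀,ⱼ ≠ 0}, ε ∈ ℝ^n, y = Φθ₀ + ε, λ > 0, and c₃ > 0. Suppose θ̂ ∈ ℝ^p satisfies the basic inequality (1/(2n))·(y − Φθ̂)ᵀW(y − Φθ̂) + λ‖θ̂‖₁ ≤ (1/(2n))·(y − Φθ₀)ᵀW(y − Φθ₀) + λ‖θ₀‖₁, that ‖ΦᵀWε/n‖∞ ≤ λ/2, and that the restricted eigenvalue condition (1/n)·aᵀΦᵀWΦa ≥ (c₃/2)·‖a_S‖₂² holds for all a ∈ ℝ^p with ‖a_{S^c}‖₁ ≤ 3‖a_S‖₁. Then ‖θ̂ − θ₀‖₁ ≤ 24·λ·|S|/c₃. -/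

import Mathlib

open Matrix Finset

/-- Deterministic ℓ₁ estimation-error bound of Theorem 1(b):
`‖θ̂ − θ₀‖₁ ≤ 24 λ |S| / c₃`. -/
theorem lasso_l1_error_bound
    (n p : ℕ) (hn : 1 ≤ n) (hp : 1 ≤ p)
    (Φ : Matrix (Fin n) (Fin p) ℝ) (W : Matrix (Fin n) (Fin n) ℝ)
    (hW : W.PosSemidef)
    (θ0 θhat : Fin p → ℝ)
    (S : Finset (Fin p)) (hS : ∀ j, j ∈ S ↔ θ0 j ≠ 0)
    (ε : Fin n → ℝ) (y : Fin n → ℝ) (hy : y = Φ.mulVec θ0 + ε)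
    (lam : ℝ) (hlam : 0 < lam) (c3 : ℝ) (hc3 : 0 < c3)
    (hbasic :
      (1 / (2 * (n : ℝ))) * ((y - Φ.mulVec θhat) ⬝ᵥ W.mulVec (y - Φ.mulVec θhat))
          + lam * ∑ j, |θhat j|
        ≤ (1 / (2 * (n : ℝ))) * ((y - Φ.mulVec θ0) ⬝ᵥ W.mulVec (y - Φ.mulVec θ0))
          + lam * ∑ j, |θ0 j|)
    (hnoise : ∀ j, |(Φᵀ.mulVec (W.mulVec ε)) j / (n : ℝ)| ≤ lam / 2)
    (hRE : ∀ a : Fin p → ℝ, (∑ j ∈ Sᶜ, |a j|) ≤ 3 * ∑ j ∈ S, |a j| →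
      c3 / 2 * (∑ j ∈ S, (a j) ^ 2) ≤ (1 / (n : ℝ)) * (a ⬝ᵥ (Φᵀ * W * Φ).mulVec a)) :
    ∑ j, |θhat j - θ0 j| ≤ 24 * lam * S.card / c3 := by

  have hn0 : (0 : ℝ) < n := by exact_mod_cast hn
  set N : ℝ := (n : ℝ) with hN
  set δ : Fin p → ℝ := θhat - θ0 with hδ
  have hδj : ∀ j, δ j = θhat j - θ0 j := fun j => rfl
  set u : Fin p → ℝ := Φᵀ.mulVec (W.mulVec ε) with hu
  set v : Fin n → ℝ := Φ.mulVec δ with hv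
  have hWT : Wᵀ = W := by have h := hW.1; simp at h; exact h
  have h0 : y - Φ.mulVec θ0 = ε := by rw [hy]; abel
  have h1 : y - Φ.mulVec θhat = ε - v := by
    rw [hy, hv, hδ, mulVec_sub]; abel
  have hΦ : ∀ (x : Fin p → ℝ) (w : Fin n → ℝ),
      x ⬝ᵥ Φᵀ.mulVec w = (Φ.mulVec x) ⬝ᵥ w := by
    intro x w
    rw [dotProduct_mulVec, vecMul_transpose]
  have hsym : ∀ x z : Fin n → ℝ, x ⬝ᵥ W.mulVec z = z ⬝ᵥ W.mulVec x := by
    intro x z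
    rw [dotProduct_mulVec, ← mulVec_transpose, hWT, dotProduct_comm]
  have hcross : ε ⬝ᵥ W.mulVec v = u ⬝ᵥ δ := by
    rw [dotProduct_comm u δ, hu, hΦ, ← hv, hsym]
  have hQid : δ ⬝ᵥ (Φᵀ * W * Φ).mulVec δ = v ⬝ᵥ W.mulVec v := by
    rw [← mulVec_mulVec, ← mulVec_mulVec, hΦ, ← hv]
  have hexp : (ε - v) ⬝ᵥ W.mulVec (ε - v)
      = ε ⬝ᵥ W.mulVec ε - 2 * (u ⬝ᵥ δ) + v ⬝ᵥ W.mulVec v := by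
    rw [mulVec_sub, sub_dotProduct, dotProduct_sub, dotProduct_sub,
      hsym v ε, hcross]
    ring
  set Q : ℝ := v ⬝ᵥ W.mulVec v with hQdef
  set D : ℝ := u ⬝ᵥ δ with hD
  set E : ℝ := ε ⬝ᵥ W.mulVec ε with hE
  set L1 : ℝ := ∑ j, |θhat j| with hL1
  set L2 : ℝ := ∑ j, |θ0 j| with hL2
  set A : ℝ := ∑ j ∈ S, |δ j| with hA
  set B : ℝ := ∑ j ∈ Sᶜ, |δ j| with hB
  have hAnn : 0 ≤ A := Finset.sum_nonneg fun j _ => abs_nonneg _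
  have hBnn : 0 ≤ B := Finset.sum_nonneg fun j _ => abs_nonneg _
  have hsplit : ∀ f : Fin p → ℝ, ∑ j, f j = ∑ j ∈ S, f j + ∑ j ∈ Sᶜ, f j := by
    intro f; rw [Finset.sum_add_sum_compl]
  -- basic inequality, denominators cleared
  have hb2 : Q ≤ 2 * D + 2 * N * lam * (L2 - L1) := by
    rw [h0, h1, hexp] at hbasic
    have e : ∀ X L : ℝ, (1 / (2 * N)) * X + lam * L = (X + 2 * N * lam * L) / (2 * N) := by
      intro X L
      field_simp
    rw [e, e, div_le_div_iff_of_pos_right (by positivity)] at hbasic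
    linarith
  -- noise term bound
  have hud : |D| ≤ N * lam / 2 * (A + B) := by
    have h2 : ∀ j, |u j| ≤ N * lam / 2 := by
      intro j
      have h3 := hnoise j
      rw [abs_div, abs_of_pos hn0] at h3
      calc |u j| = |u j| / N * N := by field_simp
        _ ≤ lam / 2 * N := mul_le_mul_of_nonneg_right h3 hn0.le
        _ = N * lam / 2 := by ring
    calc |D| ≤ ∑ j, |u j * δ j| := Finset.abs_sum_le_sum_abs _ _
      _ ≤ ∑ j, N * lam / 2 * |δ j| := by
          apply Finset.sum_le_sum
          intro j _
          rw [abs_mul]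
          exact mul_le_mul_of_nonneg_right (h2 j) (abs_nonneg _)
      _ = N * lam / 2 * (A + B) := by
          rw [← Finset.mul_sum, hsplit fun j => |δ j|]
  -- l1 difference bound
  have hz : ∀ j ∈ Sᶜ, θ0 j = 0 := by
    intro j hj
    by_contra h
    exact (Finset.mem_compl.mp hj) ((hS j).mpr h)
  have hl1 : L2 - L1 ≤ A - B := by
    rw [hL1, hL2, hsplit fun j => |θ0 j|, hsplit fun j => |θhat j|]
    have e1 : ∑ j ∈ Sᶜ, |θ0 j| = 0 :=
      Finset.sum_eq_zero fun j hj => by rw [hz j hj, abs_zero]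
    have e2 : ∑ j ∈ Sᶜ, |θhat j| = B := by
      apply Finset.sum_congr rfl
      intro j hj
      rw [hδj j, hz j hj, sub_zero]
    have e3 : ∑ j ∈ S, |θ0 j| - ∑ j ∈ S, |θhat j| ≤ A := by
      rw [← Finset.sum_sub_distrib]
      apply Finset.sum_le_sum
      intro j _
      rw [hδj, abs_sub_comm]
      exact abs_sub_abs_le_abs_sub _ _
    linarith
  have hQnn : 0 ≤ Q := by rw [hQdef]; simpa using hW.dotProduct_mulVec_nonneg v
  -- key bound : Q ≤ N λ (3A − B)
  have hkey : Q ≤ N * lam * (3 * A - B) := by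
    have hD2 : D ≤ N * lam / 2 * (A + B) := (abs_le.mp hud).2
    have h4 : 2 * N * lam * (L2 - L1) ≤ 2 * N * lam * (A - B) :=
      mul_le_mul_of_nonneg_left hl1 (by positivity)
    calc Q ≤ 2 * D + 2 * N * lam * (L2 - L1) := hb2
      _ ≤ 2 * (N * lam / 2 * (A + B)) + 2 * N * lam * (A - B) := by linarith
      _ = N * lam * (3 * A - B) := by ring
  have hNl : 0 < N * lam := mul_pos hn0 hlam
  -- cone condition
  have hcone : B ≤ 3 * A := by
    have h6 : (0:ℝ) ≤ (N * lam) * (3 * A - B) := hQnn.trans hkey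
    have h7 := (mul_nonneg_iff_of_pos_left hNl).mp h6
    linarith
  -- restricted eigenvalue
  have hre := hRE δ (by rw [← hA, ← hB]; linarith)
  rw [hQid] at hre
  set T : ℝ := ∑ j ∈ S, (δ j) ^ 2 with hT
  have hTnn : 0 ≤ T := Finset.sum_nonneg fun j _ => sq_nonneg _
  have hre2 : c3 / 2 * T * N ≤ Q := by
    have : (1 / N) * Q = Q / N := by ring
    rw [this, le_div_iff₀ hn0] at hre
    exact hre
  have hT3 : c3 / 2 * T ≤ 3 * lam * A := by
    have hBle : N * lam * (3 * A - B) ≤ N * lam * (3 * A) := by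
      have := mul_le_mul_of_nonneg_left (show 3 * A - B ≤ 3 * A by linarith) hNl.le
      linarith
    have h5 : (c3 / 2 * T) * N ≤ (3 * lam * A) * N := by
      have := (hre2.trans hkey).trans hBle
      linarith
    exact (mul_le_mul_iff_left₀ hn0).mp h5
  -- Cauchy–Schwarz
  set s : ℝ := (S.card : ℝ) with hs
  have hsnn : (0 : ℝ) ≤ s := Nat.cast_nonneg _
  have hcs : A ^ 2 ≤ s * T := by
    have h7 : (∑ j ∈ S, |δ j|) ^ 2 ≤ (S.card : ℝ) * ∑ j ∈ S, |δ j| ^ 2 := by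
      exact sq_sum_le_card_mul_sum_sq (s := S) (f := fun j => |δ j|)
    have h8 : ∑ j ∈ S, |δ j| ^ 2 = T := by
      rw [hT]; exact Finset.sum_congr rfl fun j _ => sq_abs _
    rw [← hA, h8, ← hs] at h7
    exact h7
  -- conclude
  have hfinal : A + B ≤ 24 * lam * s / c3 := by
    have hrhs : (0 : ℝ) ≤ 24 * lam * s / c3 := by positivity
    rcases eq_or_lt_of_le hAnn with hA0 | hA0
    · have hB0 : B ≤ 0 := by linarith
      linarith
    · have h9 : c3 * A ≤ 6 * lam * s := by
        have h10 : s * (c3 / 2 * T) ≤ s * (3 * lam * A) :=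
          mul_le_mul_of_nonneg_left hT3 hsnn
        have h11 : c3 / 2 * A ^ 2 ≤ c3 / 2 * (s * T) :=
          mul_le_mul_of_nonneg_left hcs (by positivity)
        have h12 : (c3 * A) * A ≤ (6 * lam * s) * A := by linarith only [h10, h11]
        exact (mul_le_mul_iff_left₀ hA0).mp h12
      have hA6 : A ≤ 6 * lam * s / c3 := by
        rw [le_div_iff₀ hc3]
        linarith
      have : 24 * lam * s / c3 = 4 * (6 * lam * s / c3) := by ring
      linarith
  calc ∑ j, |θhat j - θ0 j| = A + B := by
        rw [hsplit fun j => |θhat j - θ0 j|]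
        simp only [← hδj, ← hA, ← hB]
      _ ≤ 24 * lam * S.card / c3 := by rw [← hs]; exact hfinal
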